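/- Let F = (f_1,…,f_N), N ≥ 2, be a uniform tight frame with bound A > 0 for an n-dimensional complex inner product space H (so ∑_i |⟨x,f_i⟩|² = A‖x‖² for all x and all ‖f_i‖ are equal, hence ‖f_i‖² = An/N), and assume |⟨f_i,f_j⟩| is the same for all pairs i ≠ j. Then for every 1 ≤ m ≤ N and every p > 0, the m-erasure Frobenius average error of F with its canonical dual (f_i/A) equals AE_F^{(m),p}(F, S_F^{-1}F) = sqrt( m·(n/N)² + m(m−1)(nN − n²)/(N²(N−1)) ). -/

import Mathlib

open scoped ComplexInnerProductSpace

/-- Let `F = (f₁,…,f_N)`, `N ≥ 2`, be a uniform tight frame with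
bound `A > 0` for an `n`-dimensional complex inner product space `H`, with
`|⟨f i, f j⟩|` constant over all pairs `i ≠ j`.  Then for every `1 ≤ m ≤ N` and
`p > 0`, the `m`-erasure Frobenius average error of `F` with its canonical dual
`(f i / A)` equals `√( m (n/N)² + m(m−1)(nN − n²)/(N²(N−1)) )`.  For each erasure
set `Λ`, the squared Frobenius norm of the error operator is the (real) value of
`∑_{j,k ∈ Λ} ⟨g j, g k⟩⟨f k, f j⟩`, i.e. `(∑_{j,k∈Λ} ⟪g k, g j⟫ ⟪f j, f k⟫).re`. -/
theorem stmt_7 {H : Type*} [NormedAddCommGroup H] [InnerProductSpace ℂ H]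
    [FiniteDimensional ℂ H] (n N : ℕ) (hn : Module.finrank ℂ H = n)
    (hN : 2 ≤ N) (f : Fin N → H) (A : ℝ) (hA : 0 < A)
    (htight : ∀ x : H, ∑ i, ‖⟪f i, x⟫‖ ^ 2 = A * ‖x‖ ^ 2)
    (huniform : ∀ i j, ‖f i‖ = ‖f j‖)
    (hequi : ∃ c : ℝ, ∀ i j, i ≠ j → ‖⟪f i, f j⟫‖ = c)
    (m : ℕ) (hm1 : 1 ≤ m) (hmN : m ≤ N) (p : ℝ) (hp : 0 < p) :
    ((1 / (N.choose m : ℝ)) *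
        ∑ Λ ∈ Finset.powersetCard m (Finset.univ : Finset (Fin N)),
          ((∑ j ∈ Λ, ∑ k ∈ Λ,
              ⟪(A : ℂ)⁻¹ • f k, (A : ℂ)⁻¹ • f j⟫ * ⟪f j, f k⟫).re) ^ (p / 2)) ^ (1 / p) =
      Real.sqrt ((m : ℝ) * ((n : ℝ) / N) ^ 2 +
        (m : ℝ) * ((m : ℝ) - 1) * ((n : ℝ) * N - (n : ℝ) ^ 2) /
          ((N : ℝ) ^ 2 * ((N : ℝ) - 1))) := by
  obtain ⟨c, hc⟩ := hequi
  have hA0 : (A : ℝ) ≠ 0 := hA.ne'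
  have hNpos : (0 : ℝ) < N := by exact_mod_cast Nat.lt_of_lt_of_le Nat.zero_lt_two hN
  have hN0 : (N : ℝ) ≠ 0 := hNpos.ne'
  have hN2 : (2 : ℝ) ≤ N := by exact_mod_cast hN
  have hN1 : (N : ℝ) - 1 ≠ 0 := by linarith
  have hm1' : (1 : ℝ) ≤ m := by exact_mod_cast hm1
  set b : OrthonormalBasis (Fin n) ℂ H := (stdOrthonormalBasis ℂ H).reindex (finCongr hn) with hb
  -- Parseval
  have parseval : ∀ x : H, ∑ t, ‖⟪b t, x⟫‖ ^ 2 = ‖x‖ ^ 2 := by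
    intro x
    have h := b.sum_inner_mul_inner x x
    have h2 := congrArg Complex.re h
    rw [Complex.re_sum] at h2
    rw [← inner_self_eq_norm_sq (𝕜 := ℂ) x, RCLike.re_to_complex, ← h2]
    refine Finset.sum_congr rfl fun t _ => ?_
    rw [← inner_conj_symm x (b t), Complex.conj_mul']
    simp [← Complex.ofReal_pow]
  -- norm squared of each frame vector
  have hB : ∀ i, ‖f i‖ ^ 2 = A * n / N := by
    intro i
    have hsum : ∑ j, ‖f j‖ ^ 2 = n * A := by
      calc ∑ j, ‖f j‖ ^ 2 = ∑ j, ∑ t, ‖⟪b t, f j⟫‖ ^ 2 := by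
            exact Finset.sum_congr rfl fun j _ => (parseval (f j)).symm
        _ = ∑ t, ∑ j, ‖⟪f j, b t⟫‖ ^ 2 := by
            rw [Finset.sum_comm]
            exact Finset.sum_congr rfl fun t _ => Finset.sum_congr rfl fun j _ => by
              rw [norm_inner_symm]
        _ = ∑ t : Fin n, A * ‖b t‖ ^ 2 := Finset.sum_congr rfl fun t _ => htight (b t)
        _ = n * A := by simp [b.orthonormal.1]
    have hall : ∀ j, ‖f j‖ ^ 2 = ‖f i‖ ^ 2 := fun j => by rw [huniform j i]
    rw [Finset.sum_congr rfl (fun j _ => hall j), Finset.sum_const, Finset.card_univ,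
      Fintype.card_fin, nsmul_eq_mul] at hsum
    field_simp
    linarith [hsum]
  have hselfnorm : ∀ j : Fin N, ‖⟪f j, f j⟫‖ = ‖f j‖ ^ 2 := by
    intro j
    rw [inner_self_eq_norm_sq_to_K]
    simp [← Complex.ofReal_pow]
  -- value of c^2
  have hc2 : ((N : ℝ) - 1) * c ^ 2 * (N : ℝ) ^ 2 = A ^ 2 * n * N - A ^ 2 * (n : ℝ) ^ 2 := by
    have i0 : Fin N := ⟨0, by omega⟩
    have h := htight (f i0)
    rw [← Finset.add_sum_erase _ _ (Finset.mem_univ i0)] at h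
    have herase : ∑ j ∈ Finset.univ.erase i0, ‖⟪f j, f i0⟫‖ ^ 2 = (N - 1 : ℝ) * c ^ 2 := by
      rw [Finset.sum_congr rfl (fun j hj => by
          rw [hc j i0 (Finset.ne_of_mem_erase hj)]), Finset.sum_const, nsmul_eq_mul]
      congr 1
      rw [Finset.card_erase_of_mem (Finset.mem_univ i0), Finset.card_univ, Fintype.card_fin]
      have h1 : (1:ℕ) ≤ N := by omega
      push_cast [Nat.cast_sub h1]
      ring
    rw [herase, hselfnorm i0, hB i0] at h
    field_simp at h
    refine mul_right_cancel₀ hN0 ?_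
    linear_combination (N : ℝ) * h
  set E : ℝ := (m : ℝ) * ((n : ℝ) / N) ^ 2 +
      (m : ℝ) * ((m : ℝ) - 1) * ((n : ℝ) * N - (n : ℝ) ^ 2) /
        ((N : ℝ) ^ 2 * ((N : ℝ) - 1)) with hE
  -- algebraic identity
  have hval : A⁻¹ ^ 2 * ((m : ℝ) * (A * n / N) ^ 2 + (m : ℝ) * ((m : ℝ) - 1) * c ^ 2) = E := by
    rw [hE]
    have hcsq : c ^ 2 = A ^ 2 * ((n : ℝ) * N - (n : ℝ) ^ 2) / ((N : ℝ) ^ 2 * ((N : ℝ) - 1)) := by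
      rw [eq_div_iff (by positivity : ((N : ℝ) ^ 2 * ((N : ℝ) - 1)) ≠ 0)]
      linear_combination hc2
    rw [hcsq]
    field_simp
  have hEnonneg : 0 ≤ E := by
    rw [← hval]
    have hm0 : (0 : ℝ) ≤ (m : ℝ) - 1 := by linarith
    positivity
  -- per-term identity
  have hterm : ∀ j k : Fin N,
      (⟪(A : ℂ)⁻¹ • f k, (A : ℂ)⁻¹ • f j⟫ * ⟪f j, f k⟫ : ℂ)
        = ((A⁻¹ ^ 2 * ‖⟪f j, f k⟫‖ ^ 2 : ℝ) : ℂ) := by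
    intro j k
    rw [inner_smul_left, inner_smul_right, ← inner_conj_symm (f j) (f k),
      mul_assoc, mul_assoc, Complex.mul_conj', RCLike.norm_conj]
    simp only [map_inv₀, Complex.conj_ofReal]
    push_cast
    ring
  -- per-set value
  have key : ∀ Λ ∈ Finset.powersetCard m (Finset.univ : Finset (Fin N)),
      (∑ j ∈ Λ, ∑ k ∈ Λ,
        ⟪(A : ℂ)⁻¹ • f k, (A : ℂ)⁻¹ • f j⟫ * ⟪f j, f k⟫).re = E := by
    intro Λ hΛ
    rw [Finset.mem_powersetCard] at hΛ
    obtain ⟨-, hcard⟩ := hΛ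
    have hre : (∑ j ∈ Λ, ∑ k ∈ Λ,
        ⟪(A : ℂ)⁻¹ • f k, (A : ℂ)⁻¹ • f j⟫ * ⟪f j, f k⟫).re
        = A⁻¹ ^ 2 * ∑ j ∈ Λ, ∑ k ∈ Λ, ‖⟪f j, f k⟫‖ ^ 2 := by
      rw [Finset.mul_sum, Complex.re_sum]
      refine Finset.sum_congr rfl fun j _ => ?_
      rw [Complex.re_sum, Finset.mul_sum]
      refine Finset.sum_congr rfl fun k _ => ?_
      rw [hterm j k, Complex.ofReal_re]
    have hrow : ∀ j ∈ Λ, ∑ k ∈ Λ, ‖⟪f j, f k⟫‖ ^ 2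
        = (A * n / N) ^ 2 + ((m : ℝ) - 1) * c ^ 2 := by
      intro j hj
      rw [← Finset.add_sum_erase _ _ hj, hselfnorm j, hB j]
      congr 1
      rw [Finset.sum_congr rfl (fun k hk => by
          rw [hc j k (Ne.symm (Finset.ne_of_mem_erase hk))]), Finset.sum_const, nsmul_eq_mul,
        Finset.card_erase_of_mem hj, hcard]
      congr 1
      push_cast [Nat.cast_sub hm1]
      ring
    rw [hre, Finset.sum_congr rfl hrow, Finset.sum_const, hcard, nsmul_eq_mul, ← hval]
    ring
  -- assemble
  rw [Finset.sum_congr rfl (fun Λ hΛ => by rw [key Λ hΛ]), Finset.sum_const,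
    Finset.card_powersetCard, Finset.card_univ, Fintype.card_fin, nsmul_eq_mul]
  have hC : (N.choose m : ℝ) ≠ 0 := by exact_mod_cast (Nat.choose_pos hmN).ne'
  rw [show (1 / (N.choose m : ℝ)) * ((N.choose m : ℝ) * E ^ (p / 2)) = E ^ (p / 2) by
    field_simp]
  rw [← Real.rpow_mul hEnonneg, show p / 2 * (1 / p) = 1 / 2 by field_simp,
    Real.sqrt_eq_rpow]
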